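/- Let V : [0,1] → ℝ be constant on [0, α_e] equal to V(α_e), strictly concave and increasing on [α_e, 1], and continuously differentiable on (0,1) except possibly at α_e. For α₀ ∈ (α_e, 1) define l(α₀) = argmax_{α' ∈ [0, α_e]} (V(α₀) - V(α'))/(α₀ - α'), assumed unique with l(α₀) interior and characterized by (V(α₀) - V(l(α₀)))/(α₀ - l(α₀)) = V'(l(α₀)). Suppose V'(α₀) > V'(l(α₀)) and V'' (l(α₀)) < 0. Then dl/dα₀ = (V'(α₀) - V'(l(α₀)))/(V''(l(α₀))·(α₀ - l(α₀))) < 0, i.e. the tangency point l is strictly decreasing in α₀. -/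

import Mathlib

theorem stmt_17 (V V' V'' l : ℝ → ℝ) (α₀ l' : ℝ)
    (hderiv : ∀ x, HasDerivAt V (V' x) x)
    (hl : HasDerivAt l l' α₀)
    (hderiv2 : HasDerivAt V' (V'' (l α₀)) (l α₀))
    (htan : ∀ z, V z - V (l z) = V' (l z) * (z - l z))
    (hlt : l α₀ < α₀)
    (hnum : V' (l α₀) < V' α₀)
    (hV'' : V'' (l α₀) < 0) :
    l' = (V' α₀ - V' (l α₀)) / (V'' (l α₀) * (α₀ - l α₀)) ∧ l' < 0 := by
  have hVl : HasDerivAt (fun z => V (l z)) (V' (l α₀) * l') α₀ :=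
    (hderiv (l α₀)).comp α₀ hl
  have hV'1 : HasDerivAt (fun z => V' (l z)) (V'' (l α₀) * l') α₀ :=
    hderiv2.comp α₀ hl
  have hprod : HasDerivAt (fun z => V' (l z) * (z - l z))
      (V'' (l α₀) * l' * (α₀ - l α₀) + V' (l α₀) * (1 - l')) α₀ :=
    hV'1.mul ((hasDerivAt_id α₀).sub hl)
  have hF : HasDerivAt (fun z => V z - V (l z) - V' (l z) * (z - l z))
      (V' α₀ - V' (l α₀) * l' - (V'' (l α₀) * l' * (α₀ - l α₀) + V' (l α₀) * (1 - l'))) α₀ :=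
    ((hderiv α₀).sub hVl).sub hprod
  have hzero : (fun z => V z - V (l z) - V' (l z) * (z - l z)) = fun _ => (0 : ℝ) := by
    funext z; rw [htan z]; ring
  rw [hzero] at hF
  have h0 : V' α₀ - V' (l α₀) * l' - (V'' (l α₀) * l' * (α₀ - l α₀) + V' (l α₀) * (1 - l')) = 0 :=
    hF.unique (hasDerivAt_const α₀ 0)
  have hkey : V' α₀ - V' (l α₀) = V'' (l α₀) * (α₀ - l α₀) * l' := by linarith [h0]
  have hden : V'' (l α₀) * (α₀ - l α₀) < 0 :=
    mul_neg_of_neg_of_pos hV'' (by linarith)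
  have hl' : l' = (V' α₀ - V' (l α₀)) / (V'' (l α₀) * (α₀ - l α₀)) := by
    rw [eq_div_iff (ne_of_lt hden)] ; linarith [hkey]
  refine ⟨hl', ?_⟩
  rw [hl']
  exact div_neg_of_pos_of_neg (by linarith) hden
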